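/- Let A be a nonnegative n × n real matrix all of whose row sums equal 1 and whose column sums c_1,...,c_n satisfy ∑ (c_i - 1)² ≤ ε. Then A can be written as A = λB + Z where B is doubly stochastic, Z is entrywise nonnegative, and λ ≥ 1 - √(nε). -/

import Mathlib

open Matrix

/-- Key extraction lemma, by induction on the size of the support. -/
lemma key_extract (n : ℕ) (hn : 0 < n) :
    ∀ (N : ℕ) (M : Matrix (Fin n) (Fin n) ℝ) (ρ σ : ℝ),
      (Finset.univ.filter fun p : Fin n × Fin n => M p.1 p.2 ≠ 0).card ≤ N →
      (∀ i j, 0 ≤ M i j) →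
      (∀ i, ∑ j, M i j = ρ) →
      (∑ j, max ((∑ i, M i j) - ρ) 0) ≤ σ →
      0 ≤ σ → σ < ρ →
      ∃ B : Matrix (Fin n) (Fin n) ℝ,
        (∀ i j, 0 ≤ B i j) ∧ (∀ i, ∑ j, B i j = 1) ∧ (∀ j, ∑ i, B i j = 1) ∧
        (∀ i j, (ρ - σ) * B i j ≤ M i j) := by
  intro N
  induction N with
  | zero =>
    intro M ρ σ hcard hpos hrow hcolb hσ0 hσρ
    exfalso
    have hM : ∀ i j, M i j = 0 := by
      intro i j
      by_contra h
      have : (i, j) ∈ Finset.univ.filter fun p : Fin n × Fin n => M p.1 p.2 ≠ 0 := by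
        simp [h]
      have := Finset.card_pos.mpr ⟨_, this⟩
      omega
    have : ρ = 0 := by
      have := hrow ⟨0, hn⟩
      simp [hM] at this
      exact this.symm
    linarith
  | succ N ih =>
    intro M ρ σ hcard hpos hrow hcolb hσ0 hσρ
    have hρ : 0 < ρ := lt_of_le_of_lt hσ0 hσρ
    -- Hall's condition for the support bipartite graph
    set t : Fin n → Finset (Fin n) := fun i => Finset.univ.filter fun j => M i j ≠ 0 with ht
    have hmax0 : ∀ j, (∑ i, M i j) ≤ ρ + max ((∑ i, M i j) - ρ) 0 := by
      intro j
      have := le_max_left ((∑ i, M i j) - ρ) 0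
      linarith
    have hall : ∀ S : Finset (Fin n), S.card ≤ (S.biUnion t).card := by
      intro S
      set T := S.biUnion t with hT
      have hzero : ∀ i ∈ S, ∀ j, j ∉ T → M i j = 0 := by
        intro i hi j hj
        by_contra h
        exact hj (Finset.mem_biUnion.mpr ⟨i, hi, by simp [ht, h]⟩)
      have h1 : (S.card : ℝ) * ρ = ∑ i ∈ S, ∑ j ∈ T, M i j := by
        rw [Finset.sum_congr rfl (fun i hi => ?_)]
        · rw [Finset.sum_const, nsmul_eq_mul]
        · rw [Finset.sum_subset (Finset.subset_univ T) (fun j _ hj => hzero i hi j hj)]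
          exact hrow i
      have h2 : ∑ i ∈ S, ∑ j ∈ T, M i j ≤ ∑ i, ∑ j ∈ T, M i j :=
        Finset.sum_le_sum_of_subset_of_nonneg (Finset.subset_univ S)
          (fun i _ _ => Finset.sum_nonneg fun j _ => hpos i j)
      have h3 : ∑ i, ∑ j ∈ T, M i j = ∑ j ∈ T, ∑ i, M i j := Finset.sum_comm
      have h4 : ∑ j ∈ T, ∑ i, M i j ≤ (T.card : ℝ) * ρ + σ := by
        calc ∑ j ∈ T, ∑ i, M i j
            ≤ ∑ j ∈ T, (ρ + max ((∑ i, M i j) - ρ) 0) :=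
              Finset.sum_le_sum fun j _ => hmax0 j
          _ = (T.card : ℝ) * ρ + ∑ j ∈ T, max ((∑ i, M i j) - ρ) 0 := by
              rw [Finset.sum_add_distrib, Finset.sum_const, nsmul_eq_mul]
          _ ≤ (T.card : ℝ) * ρ + σ := by
              have : ∑ j ∈ T, max ((∑ i, M i j) - ρ) 0 ≤ ∑ j, max ((∑ i, M i j) - ρ) 0 :=
                Finset.sum_le_sum_of_subset_of_nonneg (Finset.subset_univ T)
                  (fun j _ _ => le_max_right _ _)
              linarith
      have hlt : (S.card : ℝ) * ρ < ((T.card : ℝ) + 1) * ρ := by nlinarith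
      have : (S.card : ℝ) < (T.card : ℝ) + 1 := by
        exact lt_of_mul_lt_mul_right (by linarith [hlt]) (le_of_lt hρ)
      exact_mod_cast Nat.lt_succ_iff.mp (by exact_mod_cast this)
    obtain ⟨f, hfinj, hft⟩ := (Finset.all_card_le_biUnion_card_iff_exists_injective t).mp hall
    have hfpos : ∀ i, 0 < M i (f i) := by
      intro i
      have := hft i
      simp only [ht, Finset.mem_filter] at this
      exact lt_of_le_of_ne (hpos i (f i)) (Ne.symm this.2)
    have hfbij : Function.Bijective f := Finite.injective_iff_bijective.mp hfinj
    set e : Fin n ≃ Fin n := Equiv.ofBijective f hfbij with he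
    -- the permutation matrix
    set P : Matrix (Fin n) (Fin n) ℝ := fun i j => if j = f i then 1 else 0 with hP
    have hPpos : ∀ i j, 0 ≤ P i j := by
      intro i j; simp only [hP]; split <;> norm_num
    have hProw : ∀ i, ∑ j, P i j = 1 := by
      intro i; simp [hP]
    have hPcol : ∀ j, ∑ i, P i j = 1 := by
      intro j
      have hfe : ∀ i, f (e.symm i) = i := fun i => e.apply_symm_apply i
      calc ∑ i, P i j = ∑ i, P (e.symm i) j := (Equiv.sum_comp e.symm fun i => P i j).symm
        _ = 1 := by simp [hP, hfe, eq_comm]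
    -- minimum along the "matching"
    have hne : (Finset.univ : Finset (Fin n)).Nonempty := ⟨⟨0, hn⟩, Finset.mem_univ _⟩
    set m : ℝ := Finset.univ.inf' hne fun i => M i (f i) with hm
    have hmle : ∀ i, m ≤ M i (f i) := fun i => Finset.inf'_le _ (Finset.mem_univ i)
    have hmpos : 0 < m := by
      rw [hm, Finset.lt_inf'_iff]
      exact fun i _ => hfpos i
    have hPle : ∀ i j, m * P i j ≤ M i j := by
      intro i j
      simp only [hP]
      split
      · next h => subst h; simpa using hmle i
      · simpa using hpos i j
    by_cases hcase : ρ - σ ≤ m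
    · refine ⟨P, hPpos, hProw, hPcol, fun i j => ?_⟩
      calc (ρ - σ) * P i j ≤ m * P i j := mul_le_mul_of_nonneg_right hcase (hPpos i j)
        _ ≤ M i j := hPle i j
    · push_neg at hcase
      -- subtract m • P and recurse
      set M' : Matrix (Fin n) (Fin n) ℝ := fun i j => M i j - m * P i j with hM'
      have hM'pos : ∀ i j, 0 ≤ M' i j := fun i j => by
        simp only [hM']; linarith [hPle i j]
      have hsub : (Finset.univ.filter fun p : Fin n × Fin n => M' p.1 p.2 ≠ 0) ⊆
          (Finset.univ.filter fun p : Fin n × Fin n => M p.1 p.2 ≠ 0) := by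
        intro p hp
        simp only [Finset.mem_filter, Finset.mem_univ, true_and] at hp ⊢
        intro h0
        apply hp
        simp only [hM', h0, hP]
        split
        · next hh =>
            exfalso
            have := hfpos p.1
            rw [← hh, h0] at this
            linarith
        · ring
      obtain ⟨i₀, -, hi₀⟩ := Finset.exists_mem_eq_inf' hne fun i => M i (f i)
      have hmem : (i₀, f i₀) ∈ Finset.univ.filter fun p : Fin n × Fin n => M p.1 p.2 ≠ 0 := by
        simp only [Finset.mem_filter, Finset.mem_univ, true_and]
        exact ne_of_gt (hfpos i₀)
      have hnot : (i₀, f i₀) ∉ Finset.univ.filter fun p : Fin n × Fin n => M' p.1 p.2 ≠ 0 := by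
        simp only [Finset.mem_filter, Finset.mem_univ, true_and, not_not, hM', hP,
          if_pos rfl, if_true]
        rw [hm, hi₀]; ring
      have hcard' : (Finset.univ.filter fun p : Fin n × Fin n => M' p.1 p.2 ≠ 0).card ≤ N := by
        have := Finset.card_lt_card ((Finset.ssubset_iff_of_subset hsub).mpr ⟨(i₀, f i₀), hmem, hnot⟩)
        omega
      have hrow' : ∀ i, ∑ j, M' i j = ρ - m := by
        intro i
        simp only [hM']
        rw [Finset.sum_sub_distrib, hrow, ← Finset.mul_sum, hProw, mul_one]
      have hcol' : (∑ j, max ((∑ i, M' i j) - (ρ - m)) 0) ≤ σ := by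
        have : ∀ j, (∑ i, M' i j) - (ρ - m) = (∑ i, M i j) - ρ := by
          intro j
          simp only [hM']
          rw [Finset.sum_sub_distrib, ← Finset.mul_sum, hPcol, mul_one]
          ring
        calc (∑ j, max ((∑ i, M' i j) - (ρ - m)) 0)
            = ∑ j, max ((∑ i, M i j) - ρ) 0 := by
              exact Finset.sum_congr rfl fun j _ => by rw [this j]
          _ ≤ σ := hcolb
      have hσρ' : σ < ρ - m := by linarith
      obtain ⟨B', hB'pos, hB'row, hB'col, hB'le⟩ :=
        ih M' (ρ - m) σ hcard' hM'pos hrow' hcol' hσ0 hσρ'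
      have hρσ : 0 < ρ - σ := by linarith
      refine ⟨fun i j => (m / (ρ - σ)) * P i j + ((ρ - m - σ) / (ρ - σ)) * B' i j,
        ?_, ?_, ?_, ?_⟩
      · intro i j
        have h1 : 0 ≤ m / (ρ - σ) := div_nonneg (le_of_lt hmpos) (le_of_lt hρσ)
        have h2 : 0 ≤ (ρ - m - σ) / (ρ - σ) := div_nonneg (by linarith) (le_of_lt hρσ)
        exact add_nonneg (mul_nonneg h1 (hPpos i j)) (mul_nonneg h2 (hB'pos i j))
      · intro i
        rw [Finset.sum_add_distrib, ← Finset.mul_sum, ← Finset.mul_sum, hProw, hB'row]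
        field_simp
        try ring
      · intro j
        rw [Finset.sum_add_distrib, ← Finset.mul_sum, ← Finset.mul_sum, hPcol, hB'col]
        field_simp
        try ring
      · intro i j
        have expand : (ρ - σ) * ((m / (ρ - σ)) * P i j + ((ρ - m - σ) / (ρ - σ)) * B' i j)
            = m * P i j + (ρ - m - σ) * B' i j := by
          field_simp
          try ring
        rw [expand]
        have := hB'le i j
        simp only [hM'] at this
        linarith

theorem almost_doubly_stochastic_decomposition (n : ℕ) (ε : ℝ) (hε : 0 ≤ ε)
    (A : Matrix (Fin n) (Fin n) ℝ)
    (hpos : ∀ i j, 0 ≤ A i j)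
    (hrow : ∀ i, ∑ j, A i j = 1)
    (hcol : ∑ j, ((∑ i, A i j) - 1) ^ 2 ≤ ε) :
    ∃ (l : ℝ) (B Z : Matrix (Fin n) (Fin n) ℝ),
      (∀ i j, 0 ≤ B i j) ∧ (∀ i, ∑ j, B i j = 1) ∧ (∀ j, ∑ i, B i j = 1) ∧
      (∀ i j, 0 ≤ Z i j) ∧ A = l • B + Z ∧ 1 - Real.sqrt (n * ε) ≤ l := by
  rcases Nat.eq_zero_or_pos n with hn | hn
  · subst hn
    refine ⟨1, 0, 0, ?_, ?_, ?_, ?_, ?_, ?_⟩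
    · intro i; exact i.elim0
    · intro i; exact i.elim0
    · intro j; exact j.elim0
    · intro i; exact i.elim0
    · funext i; exact i.elim0
    · simp
  · -- n ≥ 1
    set s : ℝ := ∑ j, max ((∑ i, A i j) - 1) 0 with hs
    have hs0 : 0 ≤ s := Finset.sum_nonneg fun j _ => le_max_right _ _
    have hsqrt : s ≤ Real.sqrt (n * ε) := by
      have h1 : s ^ 2 ≤ (n : ℝ) * ∑ j, (max ((∑ i, A i j) - 1) 0) ^ 2 := by
        have := sq_sum_le_card_mul_sum_sq (s := (Finset.univ : Finset (Fin n)))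
          (f := fun j => max ((∑ i, A i j) - 1) 0)
        simpa [hs] using this
      have h2 : ∑ j, (max ((∑ i, A i j) - 1) 0) ^ 2 ≤ ∑ j, ((∑ i, A i j) - 1) ^ 2 := by
        apply Finset.sum_le_sum
        intro j _
        rcases le_or_gt ((∑ i, A i j) - 1) 0 with h | h
        · rw [max_eq_right h]; simpa using sq_nonneg ((∑ i, A i j) - 1)
        · rw [max_eq_left (le_of_lt h)]
      have h3 : s ^ 2 ≤ (n : ℝ) * ε := by
        calc s ^ 2 ≤ (n : ℝ) * ∑ j, (max ((∑ i, A i j) - 1) 0) ^ 2 := h1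
          _ ≤ (n : ℝ) * ε := by
              apply mul_le_mul_of_nonneg_left _ (Nat.cast_nonneg n)
              linarith
      calc s = Real.sqrt (s ^ 2) := (Real.sqrt_sq hs0).symm
        _ ≤ Real.sqrt ((n : ℝ) * ε) := Real.sqrt_le_sqrt h3
    by_cases hs1 : s < 1
    · obtain ⟨B, hBpos, hBrow, hBcol, hBle⟩ :=
        key_extract n hn _ A 1 s le_rfl hpos hrow hs.ge hs0 hs1
      refine ⟨1 - s, B, A - (1 - s) • B, hBpos, hBrow, hBcol, ?_, ?_, by linarith⟩
      · intro i j
        have := hBle i j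
        simp only [Matrix.sub_apply, Matrix.smul_apply, smul_eq_mul]
        linarith
      · funext i j
        simp only [Matrix.add_apply, Matrix.sub_apply, Matrix.smul_apply, smul_eq_mul]
        ring
    · push_neg at hs1
      refine ⟨0, fun _ _ => 1 / n, A, ?_, ?_, ?_, hpos, ?_, by linarith⟩
      · intro i j; positivity
      · intro i
        rw [Finset.sum_const, Finset.card_univ, Fintype.card_fin, nsmul_eq_mul]
        field_simp
      · intro j
        rw [Finset.sum_const, Finset.card_univ, Fintype.card_fin, nsmul_eq_mul]
        field_simp
      · funext i j
        simp
        exact zero_mul _
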